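/- Let n, m be coprime integers with 1 < n < m, r ≥ 1, and let Γ ⊆ (ℕ ∪ {∞})^r be the tropical semiring generated by v_1 = (n,…,n), v_2 = (m,…,m), and w_1, …, w_r, where (w_i)_i = ∞ and (w_i)_j = nm for j ≠ i. Then for k ∈ ℕ, the diagonal element k̄ = (k,…,k) belongs to Γ if and only if k belongs to the numerical semigroup ⟨n,m⟩ = { an + bm : a, b ∈ ℕ }. -/

import Mathlib

/-- The tropical sub-semiring of `(ℕ∪{∞})^r` generated by a set `G`:
the smallest subset containing `0` and `G`, closed under componentwise
addition and componentwise minimum. -/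
def tropGen {r : ℕ} (G : Set (Fin r → ℕ∞)) : Set (Fin r → ℕ∞) :=
  ⋂₀ {S : Set (Fin r → ℕ∞) | 0 ∈ S ∧ G ⊆ S ∧
      (∀ a ∈ S, ∀ b ∈ S, a + b ∈ S) ∧
      (∀ a ∈ S, ∀ b ∈ S, (fun i => min (a i) (b i)) ∈ S)}

/-- Generators of the value semiring of a plane curve with `r` branches,
each with semigroup `⟨n,m⟩` and pairwise intersection multiplicities `nm`:
`v₁ = (n,…,n)`, `v₂ = (m,…,m)`, and `w_i` with `(w_i)_i = ∞`, `(w_i)_j = nm`. -/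
def genNM (n m r : ℕ) : Set (Fin r → ℕ∞) :=
  {fun _ => (n : ℕ∞)} ∪ {fun _ => (m : ℕ∞)} ∪
    Set.range (fun i : Fin r => fun j : Fin r =>
      if j = i then (⊤ : ℕ∞) else ((n * m : ℕ) : ℕ∞))

lemma tropGen_zero {r : ℕ} (G : Set (Fin r → ℕ∞)) : 0 ∈ tropGen G :=
  fun _ hS => hS.1

lemma tropGen_subset {r : ℕ} (G : Set (Fin r → ℕ∞)) : G ⊆ tropGen G :=
  fun _ hx _ hS => hS.2.1 hx

lemma tropGen_add {r : ℕ} (G : Set (Fin r → ℕ∞)) {a b : Fin r → ℕ∞}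
    (ha : a ∈ tropGen G) (hb : b ∈ tropGen G) : a + b ∈ tropGen G :=
  fun S hS => hS.2.2.1 a (ha S hS) b (hb S hS)

/-- The diagonal element `k̄ = (k,…,k)` belongs to the value semiring iff
`k` belongs to the numerical semigroup `⟨n,m⟩`. -/
theorem diagonal_mem_iff_nm (n m r : ℕ) (hn : 1 < n) (hnm : n < m)
    (hcop : Nat.Coprime n m) (hr : 1 ≤ r) (k : ℕ) :
    ((fun _ : Fin r => (k : ℕ∞)) ∈ tropGen (genNM n m r)) ↔
      ∃ a b : ℕ, k = a * n + b * m := by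
  constructor
  · intro h
    -- invariant set
    set P : Set (Fin r → ℕ∞) :=
      {v | ∀ i, v i = ⊤ ∨ ∃ a b : ℕ, v i = ((a * n + b * m : ℕ) : ℕ∞)} with hP
    have hPmem : P ∈ {S : Set (Fin r → ℕ∞) | 0 ∈ S ∧ genNM n m r ⊆ S ∧
        (∀ a ∈ S, ∀ b ∈ S, a + b ∈ S) ∧
        (∀ a ∈ S, ∀ b ∈ S, (fun i => min (a i) (b i)) ∈ S)} := by
      refine ⟨?_, ?_, ?_, ?_⟩
      · intro i; right; exact ⟨0, 0, by simp⟩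
      · rintro v ((rfl | rfl) | ⟨i, rfl⟩)
        · intro j; right; exact ⟨1, 0, by simp⟩
        · intro j; right; exact ⟨0, 1, by simp⟩
        · intro j
          by_cases hji : j = i
          · left; simp [hji]
          · right; exact ⟨m, 0, by simp [hji, mul_comm]⟩
      · intro a ha b hb i
        rcases ha i with h1 | ⟨a1, b1, h1⟩
        · left; simp [Pi.add_apply, h1]
        rcases hb i with h2 | ⟨a2, b2, h2⟩
        · left; simp [Pi.add_apply, h2]
        · right
          refine ⟨a1 + a2, b1 + b2, ?_⟩
          simp only [Pi.add_apply, h1, h2]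
          push_cast
          ring
      · intro a ha b hb i
        rcases ha i with h1 | h1
        · simpa [h1] using hb i
        · rcases hb i with h2 | h2
          · simpa [h2] using ha i
          · rcases le_total (a i) (b i) with hle | hle
            · right; obtain ⟨a1, b1, e⟩ := h1
              exact ⟨a1, b1, by show min (a i) (b i) = _; rw [min_eq_left hle, e]⟩
            · right; obtain ⟨a1, b1, e⟩ := h2
              exact ⟨a1, b1, by show min (a i) (b i) = _; rw [min_eq_right hle, e]⟩
    have := h P hPmem ⟨0, hr⟩
    rcases this with h1 | ⟨a, b, hab⟩
    · simp at h1
    · simp only at hab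
      exact ⟨a, b, by exact_mod_cast hab⟩
  · rintro ⟨a, b, rfl⟩
    have hdiag : ∀ c : ℕ, (∃ a b : ℕ, c = a * n + b * m) →
        ((fun _ : Fin r => (c : ℕ∞)) ∈ tropGen (genNM n m r)) := by
      have hv1 : (fun _ : Fin r => (n : ℕ∞)) ∈ tropGen (genNM n m r) :=
        tropGen_subset _ (Or.inl (Or.inl rfl))
      have hv2 : (fun _ : Fin r => (m : ℕ∞)) ∈ tropGen (genNM n m r) :=
        tropGen_subset _ (Or.inl (Or.inr rfl))
      rintro c ⟨a, b, rfl⟩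
      induction a with
      | zero =>
        induction b with
        | zero =>
          convert tropGen_zero (genNM n m r) using 1
          funext i
          simp
        | succ b ih =>
          have := tropGen_add _ ih hv2
          convert this using 1
          funext i
          simp [Pi.add_apply]
          push_cast
          ring
      | succ a ih =>
        have := tropGen_add _ ih hv1
        convert this using 1
        funext i
        simp [Pi.add_apply]
        push_cast
        ring
    exact hdiag _ ⟨a, b, rfl⟩
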